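/- Let j be a positive integer and s_1, a_1, s_2, a_2 integers satisfying: (i) j divides s_1 and j divides s_2; (ii) a_1 \equiv j (mod 2j) and a_2 \equiv j (mod 2j); (iii) 2(s_1 + s_2) = a_1 + a_2. Then for all integers n, C(n) = C(n - s_1 - C(n - a_1)) + C(n - s_2 - C(n - a_2)). -/

import Mathlib

def C (j : ℕ) (n : ℤ) : ℤ := ∑ i ∈ Finset.range j, ⌈((n : ℚ) - i) / (2 * j)⌉

lemma C_shift (j : ℕ) (hj : 0 < j) (m k : ℤ) :
    C j (m + 2 * j * k) = C j m + j * k := by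
  have h2j : (2 * (j:ℚ)) ≠ 0 := by positivity
  unfold C
  have h : ∀ i ∈ Finset.range j,
      ⌈(((m + 2*j*k : ℤ):ℚ) - i)/(2*j)⌉ = ⌈((m:ℚ)-i)/(2*(j:ℚ))⌉ + k := by
    intro i _
    rw [show ((m + 2*j*k : ℤ):ℚ) - i = (((m:ℚ) - i)/(2*(j:ℚ)) + k) * (2*(j:ℚ)) by
      field_simp; push_cast; ring]
    rw [mul_div_cancel_right₀ _ h2j, Int.ceil_add_intCast]
  rw [Finset.sum_congr rfl h, Finset.sum_add_distrib]
  simp [mul_comm]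

lemma S_succ (j : ℕ) (hj : 0 < j) (m : ℤ) :
    ∑ i ∈ Finset.range (2*j), ⌈(((m+1:ℤ):ℚ) - i) / (2 * j)⌉
      = (∑ i ∈ Finset.range (2*j), ⌈((m : ℚ) - i) / (2 * j)⌉) + 1 := by
  have h2j : (2 * (j:ℚ)) ≠ 0 := by positivity
  obtain ⟨M, hM⟩ : ∃ M, 2*j = M + 1 := ⟨2*j - 1, by omega⟩
  rw [hM, Finset.sum_range_succ', Finset.sum_range_succ]
  have hMq : (M : ℚ) = 2 * (j:ℚ) - 1 := by
    have := congrArg (fun n : ℕ => (n:ℚ)) hM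
    push_cast at this
    linarith
  have h1 : ∀ i ∈ Finset.range M,
      ⌈(((m+1:ℤ):ℚ) - (↑(i+1) : ℚ))/(2*(j:ℚ))⌉ = ⌈((m:ℚ) - i)/(2*(j:ℚ))⌉ := by
    intro i _
    congr 1
    push_cast
    ring
  rw [Finset.sum_congr rfl h1]
  have h2 : ⌈(((m+1:ℤ):ℚ) - (↑(0:ℕ):ℚ))/(2*(j:ℚ))⌉ = ⌈((m:ℚ) - M)/(2*(j:ℚ))⌉ + 1 := by
    rw [show (((m+1:ℤ):ℚ) - (↑(0:ℕ):ℚ))/(2*(j:ℚ)) = ((m:ℚ) - M)/(2*(j:ℚ)) + 1 by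
      rw [div_add_one h2j]; congr 1; push_cast; rw [hMq]; ring]
    exact_mod_cast Int.ceil_add_one _
  rw [h2]
  ring

lemma S_eq (j : ℕ) (hj : 0 < j) (m : ℤ) :
    ∑ i ∈ Finset.range (2*j), ⌈((m : ℚ) - i) / (2 * j)⌉ = m := by
  induction m using Int.induction_on with
  | zero =>
    rw [Finset.sum_eq_zero]
    intro i hi
    rw [Int.ceil_eq_zero_iff]
    constructor
    · rw [Finset.mem_range] at hi
      have h1 : (i:ℚ) < 2 * (j:ℚ) := by exact_mod_cast hi
      rw [lt_div_iff₀ (by positivity)]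
      push_cast
      nlinarith
    · apply div_nonpos_of_nonpos_of_nonneg
      · push_cast; simp
      · positivity
  | succ n ih =>
    have := S_succ j hj n
    push_cast at this ⊢
    rw [this]
    push_cast at ih
    rw [ih]
  | pred n ih =>
    have key := S_succ j hj (-(n:ℤ)-1)
    rw [show (-(n:ℤ) - 1 + 1) = -(n:ℤ) by ring] at key
    linarith [key, ih]

lemma C_add_C (j : ℕ) (hj : 0 < j) (m : ℤ) :
    C j m + C j (m - j) = m := by
  have key : C j m + C j (m - j)
      = ∑ i ∈ Finset.range (2*j), ⌈((m:ℚ) - i)/(2*(j:ℚ))⌉ := by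
    rw [two_mul, Finset.sum_range_add]
    unfold C
    congr 1
    apply Finset.sum_congr rfl
    intro i _
    congr 1
    push_cast
    ring
  rw [key, S_eq j hj]

lemma C_pair (j : ℕ) (hj : 0 < j) (m k : ℤ) :
    C j (m + j*k) + C j (m + j*(-1-k)) = m := by
  rcases Int.even_or_odd k with ⟨p, hp⟩ | ⟨p, hp⟩
  · rw [show m + j*k = m + 2*j*p by rw [hp]; ring,
      show m + j*(-1-k) = (m - j) + 2*j*(-p) by rw [hp]; ring,
      C_shift j hj, C_shift j hj]
    have := C_add_C j hj m
    linarith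
  · rw [show m + j*k = (m + j) + 2*j*p by rw [hp]; ring,
      show m + j*(-1-k) = m + 2*j*(-1-p) by rw [hp]; ring,
      C_shift j hj, C_shift j hj]
    have h1 := C_add_C j hj (m + j)
    rw [show m + (j:ℤ) - j = m by ring] at h1
    linarith

theorem stmt14 (j : ℕ) (hj : 0 < j) (s₁ a₁ s₂ a₂ : ℤ)
    (h1 : (j : ℤ) ∣ s₁) (h2 : (j : ℤ) ∣ s₂)
    (h3 : a₁ % (2 * j) = (j : ℤ) % (2 * j))
    (h4 : a₂ % (2 * j) = (j : ℤ) % (2 * j))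
    (h5 : 2 * (s₁ + s₂) = a₁ + a₂) :
    ∀ n : ℤ, C j n = C j (n - s₁ - C j (n - a₁)) + C j (n - s₂ - C j (n - a₂)) := by
  intro n
  have hjz : (j : ℤ) ≠ 0 := by exact_mod_cast hj.ne'
  obtain ⟨u₁, hu₁⟩ := h1
  obtain ⟨u₂, hu₂⟩ := h2
  obtain ⟨t₁, ht₁⟩ : (2 * (j:ℤ)) ∣ (j : ℤ) - a₁ := Int.ModEq.dvd h3
  obtain ⟨t₂, ht₂⟩ : (2 * (j:ℤ)) ∣ (j : ℤ) - a₂ := Int.ModEq.dvd h4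
  -- a_i = j - 2*j*t_i
  have hCn : C j (n - (j:ℤ)) = n - C j n := by
    have := C_add_C j hj n; linarith
  have harg1 : n - a₁ = (n - (j:ℤ)) + 2 * j * t₁ := by linarith
  have harg2 : n - a₂ = (n - (j:ℤ)) + 2 * j * t₂ := by linarith
  rw [harg1, harg2, C_shift j hj, C_shift j hj, hCn]
  have e1 : n - s₁ - (n - C j n + (j:ℤ) * t₁) = C j n + j * (-(u₁ + t₁)) := by
    rw [hu₁]; ring
  have e2 : n - s₂ - (n - C j n + (j:ℤ) * t₂) = C j n + j * (-(u₂ + t₂)) := by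
    rw [hu₂]; ring
  rw [e1, e2]
  have hk : -(u₂ + t₂) = -1 - (-(u₁ + t₁)) := by
    have : (j:ℤ) * (u₁ + u₂) = (j:ℤ) * (1 - t₁ - t₂) := by linarith
    have := mul_left_cancel₀ hjz this
    linarith
  rw [hk]
  exact (C_pair j hj (C j n) (-(u₁ + t₁))).symm
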